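/- Let f : {0,1}^n → {0,1} and let 0 < Δ ≤ 1. If d(f, 0) ≥ Δ, then the number of voters i ∈ {1,…,n} with OSI_i(f) ≤ Δ/n is at most 1 + log₂(1/Δ). -/
import Mathlib


namespace JudgementAggregation

open Finset

open Classical in
noncomputable def prob {α : Type*} (s : Finset α) (P : α → Prop) : ℝ :=
  ((s.filter P).card : ℝ) / s.card

/-- Distance between boolean functions: probability of disagreement, uniform on `{0,1}^n`. -/
noncomputable def bdist {n : ℕ} (f g : (Fin n → Bool) → Bool) : ℝ :=
  prob (Finset.univ : Finset (Fin n → Bool)) (fun x => f x ≠ g x)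

/-- The (zero-)ignorability of voter `i` on `f`: `Pr[f(x) = 1 | x_i = 0]`. -/
noncomputable def osi {n : ℕ} (i : Fin n) (f : (Fin n → Bool) → Bool) : ℝ :=
  prob (Finset.univ.filter (fun x : Fin n → Bool => x i = false)) (fun x => f x = true)

lemma prob_eq {α : Type*} (s : Finset α) (P : α → Prop) [DecidablePred P] :
    prob s P = ((s.filter P).card : ℝ) / s.card := by
  unfold prob
  rw [Finset.filter_congr_decidable]

lemma card_forced (n : ℕ) (S : Finset (Fin n)) (b : Bool) :
    (univ.filter (fun x : Fin n → Bool => ∀ i ∈ S, x i = b)).card = 2 ^ (n - S.card) := by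
  classical
  have h : univ.filter (fun x : Fin n → Bool => ∀ i ∈ S, x i = b)
      = Fintype.piFinset (fun i => if i ∈ S then ({b} : Finset Bool) else Finset.univ) := by
    ext x
    simp only [mem_filter, mem_univ, true_and, Fintype.mem_piFinset]
    constructor
    · intro h i; by_cases hi : i ∈ S <;> simp [hi, h i]
    · intro h i hi; have := h i; simp [hi] at this; exact this
  rw [h, Fintype.card_piFinset]
  have : ∀ i : Fin n, (if i ∈ S then ({b} : Finset Bool) else Finset.univ).card
      = if i ∈ S then 1 else 2 := by intro i; split <;> simp
  simp only [this]
  rw [Finset.prod_ite, Finset.prod_const, Finset.prod_const]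
  simp [Finset.filter_mem_eq_inter, filter_not]
  rw [card_sdiff_of_subset (subset_univ S), card_univ, Fintype.card_fin]

/-- a function far from zero has few voters with small ignorability. -/
theorem few_small_ignorability (n : ℕ) (f : (Fin n → Bool) → Bool) (Δ : ℝ)
    (hΔ0 : 0 < Δ) (hΔ1 : Δ ≤ 1) (hfar : Δ ≤ bdist f (fun _ => false)) :
    (((Finset.univ.filter (fun i : Fin n => osi i f ≤ Δ / (n:ℝ))).card : ℝ)) ≤
      1 + Real.logb 2 (1/Δ) := by
  set S := Finset.univ.filter (fun i : Fin n => osi i f ≤ Δ / (n:ℝ)) with hS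
  have hlog0 : 0 ≤ Real.logb 2 (1/Δ) := by
    apply Real.logb_nonneg one_lt_two
    rw [le_div_iff₀ hΔ0]; linarith
  by_cases hk0 : S.card = 0
  · rw [hk0]; push_cast; linarith
  have hn0 : 0 < n := by
    rcases card_pos.mp (Nat.pos_of_ne_zero hk0) with ⟨i, _⟩; exact i.pos
  set k := S.card with hk
  have hkn : k ≤ n := by
    have := card_le_card (subset_univ S)
    simpa [card_univ] using this
  set A := univ.filter (fun x : Fin n → Bool => f x = true) with hA
  have hTA : Δ * 2 ^ n ≤ (A.card : ℝ) := by
    have hb : bdist f (fun _ => false) = (A.card : ℝ) / 2 ^ n := by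
      unfold bdist
      rw [prob_eq, card_univ]
      have h1 : (univ.filter (fun x : Fin n → Bool => f x ≠ (fun _ => false) x)).card = A.card := by
        congr 1; ext x; simp [hA]
      rw [h1]
      simp
    rw [hb] at hfar
    have := (le_div_iff₀ (by positivity : (0:ℝ) < 2 ^ n)).mp hfar
    linarith
  have hbad : ∀ i ∈ S, ((univ.filter (fun x : Fin n → Bool => x i = false ∧ f x = true)).card : ℝ)
      ≤ Δ / n * 2 ^ (n - 1) := by
    intro i hi
    have hi' : osi i f ≤ Δ / n := (mem_filter.mp hi).2
    unfold osi at hi'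
    rw [prob_eq, filter_filter] at hi'
    have hden : ((univ.filter (fun x : Fin n → Bool => x i = false)).card : ℕ) = 2 ^ (n - 1) := by
      have h := card_forced n {i} false
      rw [show (2:ℕ) ^ (n - 1) = 2 ^ (n - ({i} : Finset (Fin n)).card) by simp, ← h]
      congr 1; ext x; simp
    rw [hden] at hi'
    have hp : (0:ℝ) < ((2 ^ (n - 1) : ℕ) : ℝ) := by positivity
    have h2 := (div_le_iff₀ hp).mp hi'
    calc ((univ.filter (fun x : Fin n → Bool => x i = false ∧ f x = true)).card : ℝ)
        ≤ Δ / n * ((2 ^ (n - 1) : ℕ) : ℝ) := h2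
      _ = Δ / n * 2 ^ (n - 1) := by push_cast; ring
  set G := univ.filter (fun x : Fin n → Bool => f x = true ∧ ∀ i ∈ S, x i = true) with hG
  have hsplit : A.card ≤ G.card +
      ∑ i ∈ S, (univ.filter (fun x : Fin n → Bool => x i = false ∧ f x = true)).card := by
    classical
    have h1 : (A.filter (fun x => ∀ i ∈ S, x i = true)).card
        + (A.filter (fun x => ¬ ∀ i ∈ S, x i = true)).card = A.card :=
      card_filter_add_card_filter_not _
    have h2 : (A.filter (fun x => ∀ i ∈ S, x i = true)).card = G.card := by
      congr 1; ext x; simp [hA, hG]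
    have h3 : A.filter (fun x => ¬ ∀ i ∈ S, x i = true)
        ⊆ S.biUnion (fun i => univ.filter (fun x : Fin n → Bool => x i = false ∧ f x = true)) := by
      intro x hx
      rw [mem_filter] at hx
      obtain ⟨hxA, hnall⟩ := hx
      rw [hA, mem_filter] at hxA
      push_neg at hnall
      obtain ⟨i, hiS, hxi⟩ := hnall
      rw [mem_biUnion]
      exact ⟨i, hiS, by simp [Bool.not_eq_true] at hxi; simp [hxi, hxA.2]⟩
    calc A.card = (A.filter (fun x => ∀ i ∈ S, x i = true)).card
          + (A.filter (fun x => ¬ ∀ i ∈ S, x i = true)).card := h1.symm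
      _ ≤ G.card + ∑ i ∈ S, (univ.filter (fun x : Fin n → Bool => x i = false ∧ f x = true)).card := by
          rw [h2]
          exact Nat.add_le_add_left ((card_le_card h3).trans (card_biUnion_le)) _
  have hGcard : (G.card : ℝ) ≤ 2 ^ (n - k) := by
    have hsub : G ⊆ univ.filter (fun x : Fin n → Bool => ∀ i ∈ S, x i = true) := by
      intro x hx
      rw [hG, mem_filter] at hx
      rw [mem_filter]
      exact ⟨mem_univ x, hx.2.2⟩
    have := (card_le_card hsub).trans_eq (card_forced n S true)
    exact_mod_cast this
  have hsum : (∑ i ∈ S, ((univ.filter (fun x : Fin n → Bool => x i = false ∧ f x = true)).card : ℝ))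
      ≤ Δ * 2 ^ (n - 1) := by
    have hkn' : (k:ℝ) ≤ n := by exact_mod_cast hkn
    have h2p : (0:ℝ) < 2 ^ (n-1) := by positivity
    calc (∑ i ∈ S, ((univ.filter (fun x : Fin n → Bool => x i = false ∧ f x = true)).card : ℝ))
        ≤ ∑ _i ∈ S, Δ / n * 2 ^ (n - 1) := Finset.sum_le_sum hbad
      _ = k * (Δ / n * 2 ^ (n - 1)) := by rw [Finset.sum_const]; push_cast; ring
      _ ≤ Δ * 2 ^ (n - 1) := by
          rw [div_mul_eq_mul_div, mul_div_assoc']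
          rw [div_le_iff₀ (by exact_mod_cast hn0 : (0:ℝ) < n)]
          nlinarith [mul_le_mul_of_nonneg_right hkn' (le_of_lt (by positivity : (0:ℝ) < Δ * 2 ^ (n-1)))]
  have hmain : Δ * 2 ^ (n - 1) ≤ (2:ℝ) ^ (n - k) := by
    have hcast : (A.card : ℝ) ≤ (G.card : ℝ) +
        ∑ i ∈ S, ((univ.filter (fun x : Fin n → Bool => x i = false ∧ f x = true)).card : ℝ) := by
      push_cast
      exact_mod_cast hsplit
    have hpow : (2:ℝ) ^ n = 2 * 2 ^ (n - 1) := by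
      conv_lhs => rw [← Nat.succ_pred_eq_of_pos hn0]
      rw [pow_succ']
      norm_num [Nat.pred_eq_sub_one]
    rw [hpow] at hTA
    linarith
  have hkey : Δ ≤ (2:ℝ) ^ ((1:ℤ) - k) := by
    have e1 : ((2:ℝ)) ^ (n - k) = (2:ℝ) ^ ((n:ℤ) - k) := by
      rw [← zpow_natCast]; congr 1; exact (Nat.cast_sub hkn)
    have e2 : ((2:ℝ)) ^ (n - 1) = (2:ℝ) ^ ((n:ℤ) - 1) := by
      rw [← zpow_natCast]; congr 1; exact (Nat.cast_sub hn0)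
    rw [e1, e2] at hmain
    have h2p : (0:ℝ) < (2:ℝ) ^ ((n:ℤ) - 1) := by positivity
    rw [← le_div_iff₀ h2p] at hmain
    calc Δ ≤ (2:ℝ) ^ ((n:ℤ) - k) / (2:ℝ) ^ ((n:ℤ) - 1) := hmain
      _ = (2:ℝ) ^ ((1:ℤ) - k) := by
          rw [← zpow_sub₀ (by norm_num : (2:ℝ) ≠ 0)]
          congr 1
          ring
  have hlogpow : Real.logb 2 ((2:ℝ) ^ ((1:ℤ) - k)) = (((1:ℤ) - k : ℤ) : ℝ) := by
    rw [← Real.rpow_intCast 2 ((1:ℤ) - k), Real.logb_rpow (by norm_num : (0:ℝ) < 2) (by norm_num : (2:ℝ) ≠ 1)]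
  have hlog : Real.logb 2 Δ ≤ (1:ℝ) - k := by
    have := Real.logb_le_logb_of_le one_lt_two hΔ0 hkey
    rw [hlogpow] at this
    push_cast at this
    linarith
  have hinv : Real.logb 2 (1/Δ) = - Real.logb 2 Δ := by
    rw [one_div, Real.logb_inv]
  rw [hinv]
  linarith

end JudgementAggregation
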